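/- arXiv:1609.06808 — 3 statements merged into one kernel-verified Lean document; each statement's English description precedes it below -/
import Mathlib

section
/- Let (Ω, μ) be a measure space and let u, v, g_u, g_v ∈ L^p(μ) with p > 1, g_u, g_v ≥ 0. Suppose I(u) = I(v) = min where I(w) = ∫ g_w^p dμ + L(w) with L linear, g_w := minimal upper gradient satisfying g_{(u+v)/2} ≤ (g_u + g_v)/2. Then g_u = g_v μ-almost everywhere and L(u) = L(v). -/
open MeasureTheory

lemma midpoint_rpow_le {p : ℝ} (hp : 1 < p) {a b : ℝ} (ha : 0 ≤ a) (hb : 0 ≤ b) :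
    ((a + b) / 2) ^ p ≤ (a ^ p + b ^ p) / 2 := by
  rcases eq_or_ne a b with rfl | hab
  · rw [add_self_div_two, add_self_div_two]
  · have h := (strictConvexOn_rpow hp).2 (Set.mem_Ici.2 ha) (Set.mem_Ici.2 hb) hab
      (by norm_num : (0:ℝ) < 1/2) (by norm_num : (0:ℝ) < 1/2) (by norm_num)
    have e : 1/2*a+1/2*b = (a+b)/2 := by ring
    simp only [smul_eq_mul] at h
    rw [e] at h
    linarith

lemma midpoint_rpow_lt {p : ℝ} (hp : 1 < p) {a b : ℝ} (ha : 0 ≤ a) (hb : 0 ≤ b)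
    (hab : a ≠ b) : ((a + b) / 2) ^ p < (a ^ p + b ^ p) / 2 := by
  have h := (strictConvexOn_rpow hp).2 (Set.mem_Ici.2 ha) (Set.mem_Ici.2 hb) hab
    (by norm_num : (0:ℝ) < 1/2) (by norm_num : (0:ℝ) < 1/2) (by norm_num)
  have e : 1/2*a+1/2*b = (a+b)/2 := by ring
  simp only [smul_eq_mul] at h
  rw [e] at h
  linarith

/-- Near-uniqueness of minimizers: if `u` and `v` both minimize
`I(w) = ∫ g_w^p dμ + L(w)` with `L` linear and `g_{(u+v)/2} ≤ (g_u+g_v)/2`,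
then `g_u = g_v` a.e. and `L(u) = L(v)`. -/
theorem minimizers_same_gradient {α : Type*} [MeasurableSpace α] (μ : Measure α)
    (p : ℝ) (hp : 1 < p)
    (gu gv gw : α → ℝ)
    (hgu0 : ∀ x, 0 ≤ gu x) (hgv0 : ∀ x, 0 ≤ gv x) (hgw0 : ∀ x, 0 ≤ gw x)
    (hgum : Measurable gu) (hgvm : Measurable gv) (hgwm : Measurable gw)
    (hgu_int : Integrable (fun x => gu x ^ p) μ)
    (hgv_int : Integrable (fun x => gv x ^ p) μ)
    (Lu Lv : ℝ)
    -- `u` and `v` are both minimizers: their energies agree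
    (heq : (∫ x, gu x ^ p ∂μ) + Lu = (∫ x, gv x ^ p ∂μ) + Lv)
    -- the midpoint `(u+v)/2` is a competitor, having upper gradient `gw` and
    -- boundary term `(Lu+Lv)/2` by linearity of `L`
    (hgw_le : ∀ᵐ x ∂μ, gw x ≤ (gu x + gv x) / 2)
    (hmin : (∫ x, gu x ^ p ∂μ) + Lu ≤ (∫ x, gw x ^ p ∂μ) + (Lu + Lv) / 2) :
    gu =ᵐ[μ] gv ∧ Lu = Lv := by
  have hp0 : (0:ℝ) ≤ p := by linarith
  set m : α → ℝ := fun x => (gu x + gv x) / 2 with hm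
  have hm0 : ∀ x, 0 ≤ m x := fun x => div_nonneg (add_nonneg (hgu0 x) (hgv0 x)) two_pos.le
  -- the "defect" function
  set h : α → ℝ := fun x => (gu x ^ p + gv x ^ p) / 2 - m x ^ p with hh
  have hh0 : ∀ x, 0 ≤ h x := fun x =>
    sub_nonneg.2 (midpoint_rpow_le hp (hgu0 x) (hgv0 x))
  have hmm : Measurable fun x => m x ^ p :=
    (Real.continuous_rpow_const hp0).measurable.comp ((hgum.add hgvm).div_const 2)
  have hmean_int : Integrable (fun x => (gu x ^ p + gv x ^ p) / 2) μ :=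
    (hgu_int.add hgv_int).div_const 2
  have hmp_int : Integrable (fun x => m x ^ p) μ := by
    refine hmean_int.mono' hmm.aestronglyMeasurable (Filter.Eventually.of_forall fun x => ?_)
    rw [Real.norm_of_nonneg (Real.rpow_nonneg (hm0 x) p)]
    exact midpoint_rpow_le hp (hgu0 x) (hgv0 x)
  have hh_int : Integrable h μ := hmean_int.sub hmp_int
  have hwp_int : Integrable (fun x => gw x ^ p) μ := by
    refine hmp_int.mono' ((Real.continuous_rpow_const hp0).measurable.comp hgwm).aestronglyMeasurable ?_
    filter_upwards [hgw_le] with x hx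
    rw [Real.norm_of_nonneg (Real.rpow_nonneg (hgw0 x) p)]
    exact Real.rpow_le_rpow (hgw0 x) hx hp0
  have hI1 : (∫ x, gw x ^ p ∂μ) ≤ ∫ x, m x ^ p ∂μ := by
    refine integral_mono_ae hwp_int hmp_int ?_
    filter_upwards [hgw_le] with x hx
    exact Real.rpow_le_rpow (hgw0 x) hx hp0
  have hI2 : (∫ x, m x ^ p ∂μ) ≤ ∫ x, (gu x ^ p + gv x ^ p) / 2 ∂μ :=
    integral_mono hmp_int hmean_int fun x =>
      midpoint_rpow_le hp (hgu0 x) (hgv0 x)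
  have hmean : (∫ x, (gu x ^ p + gv x ^ p) / 2 ∂μ)
      = ((∫ x, gu x ^ p ∂μ) + ∫ x, gv x ^ p ∂μ) / 2 := by
    rw [integral_div, integral_add hgu_int hgv_int]
  -- chain of inequalities collapses
  have hIh : (∫ x, h x ∂μ) = 0 := by
    have := integral_sub hmean_int hmp_int
    have hle : (∫ x, h x ∂μ) ≤ 0 := by
      rw [hh]
      rw [integral_sub hmean_int hmp_int, hmean]
      have : ((∫ x, gu x ^ p ∂μ) + ∫ x, gv x ^ p ∂μ) / 2 ≤ ∫ x, m x ^ p ∂μ := by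
        linarith
      linarith
    have hge : 0 ≤ (∫ x, h x ∂μ) :=
      integral_nonneg fun x => hh0 x
    linarith
  have hae : h =ᵐ[μ] 0 := by
    have := (integral_eq_zero_iff_of_nonneg (fun x => hh0 x) hh_int).1 hIh
    exact this
  have haeuv : gu =ᵐ[μ] gv := by
    filter_upwards [hae] with x hx
    by_contra hne
    have := midpoint_rpow_lt hp (hgu0 x) (hgv0 x) hne
    have : 0 < h x := sub_pos.2 this
    simp only [Pi.zero_apply] at hx
    linarith
  refine ⟨haeuv, ?_⟩
  have : (∫ x, gu x ^ p ∂μ) = ∫ x, gv x ^ p ∂μ :=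
    integral_congr_ae (haeuv.mono fun x hx => by simp [hx])
  linarith
end

section
/- Let u, v be minimizers of I(w) = ∫_Ω g_w^p dμ + ∫_{∂Ω} Tw f dP_Ω over N^{1,p}(Ω), where the minimal p-weak upper gradients satisfy g_{max{u,v}} ≤ g_u χ_{{u≥v}} + g_v χ_{{u<v}} and g_{min{u,v}} ≤ g_u χ_{{u<v}} + g_v χ_{{u≥v}}, g_u = g_v a.e., and the trace operator is linear and preserves max/min. Then max{u,v} and min{u,v} are also minimizers of I. -/
open MeasureTheory

/-- If `u` and `v` minimize the Neumann functional
`I(w) = ∫_Ω g_w^p dμ + ∫_{∂Ω} Tw f dP`, then so do `max{u,v}` and `min{u,v}`. -/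
theorem max_min_of_minimizers {α β : Type*} [MeasurableSpace α] [MeasurableSpace β]
    (μ : Measure α) (P : Measure β) (p : ℝ) (hp : 1 < p)
    (g : (α → ℝ) → α → ℝ) (T : (α → ℝ) → β → ℝ) (f : β → ℝ)
    (I : (α → ℝ) → ℝ)
    (hI : ∀ w, I w = (∫ x, g w x ^ p ∂μ) + ∫ y, T w y * f y ∂P)
    (hg0 : ∀ w x, 0 ≤ g w x)
    (u v : α → ℝ)
    -- structure of minimal p-weak upper gradients of max and min
    (hgmax : ∀ᵐ x ∂μ,
      g (fun z => max (u z) (v z)) x ≤ if v x ≤ u x then g u x else g v x)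
    (hgmin : ∀ᵐ x ∂μ,
      g (fun z => min (u z) (v z)) x ≤ if u x < v x then g u x else g v x)
    (hguv : g u =ᵐ[μ] g v)
    -- trace operator preserves max and min
    (hTmax : T (fun z => max (u z) (v z)) = fun y => max (T u y) (T v y))
    (hTmin : T (fun z => min (u z) (v z)) = fun y => min (T u y) (T v y))
    -- integrability
    (hgu_int : Integrable (fun x => g u x ^ p) μ)
    (hgmax_int : Integrable (fun x => g (fun z => max (u z) (v z)) x ^ p) μ)
    (hgmin_int : Integrable (fun x => g (fun z => min (u z) (v z)) x ^ p) μ)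
    (hTu_int : Integrable (fun y => T u y * f y) P)
    (hTv_int : Integrable (fun y => T v y * f y) P)
    (hTmax_int : Integrable (fun y => max (T u y) (T v y) * f y) P)
    (hTmin_int : Integrable (fun y => min (T u y) (T v y) * f y) P)
    -- u and v are minimizers
    (hu : ∀ w, I u ≤ I w) (hv : ∀ w, I v ≤ I w) :
    (∀ w, I (fun z => max (u z) (v z)) ≤ I w) ∧
    (∀ w, I (fun z => min (u z) (v z)) ≤ I w) := by

  classical
  set M : α → ℝ := fun z => max (u z) (v z) with hM
  set m : α → ℝ := fun z => min (u z) (v z) with hm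
  have hguv_int : Integrable (fun x => g v x ^ p) μ := by
    apply hgu_int.congr
    filter_upwards [hguv] with x hx
    rw [hx]
  -- gradient part
  have hgrad : (∫ x, g M x ^ p ∂μ) + (∫ x, g m x ^ p ∂μ)
      ≤ (∫ x, g u x ^ p ∂μ) + (∫ x, g v x ^ p ∂μ) := by
    rw [← integral_add hgmax_int hgmin_int, ← integral_add hgu_int hguv_int]
    apply integral_mono_ae (hgmax_int.add hgmin_int) (hgu_int.add hguv_int)
    filter_upwards [hgmax, hgmin] with x hx1 hx2
    simp only [Pi.add_apply]
    have hp0 : (0:ℝ) ≤ p := by linarith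
    by_cases h : v x ≤ u x
    · rw [if_pos h] at hx1
      rw [if_neg (not_lt.mpr h)] at hx2
      have h1 := Real.rpow_le_rpow (hg0 M x) hx1 hp0
      have h2 := Real.rpow_le_rpow (hg0 m x) hx2 hp0
      linarith
    · rw [if_neg h] at hx1
      rw [if_pos (not_le.mp h)] at hx2
      have h1 := Real.rpow_le_rpow (hg0 M x) hx1 hp0
      have h2 := Real.rpow_le_rpow (hg0 m x) hx2 hp0
      linarith
  -- trace part
  have htrace : (∫ y, T M y * f y ∂P) + (∫ y, T m y * f y ∂P)
      = (∫ y, T u y * f y ∂P) + (∫ y, T v y * f y ∂P) := by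
    rw [hM, hm, hTmax, hTmin, ← integral_add hTmax_int hTmin_int,
        ← integral_add hTu_int hTv_int]
    congr 1
    funext y
    linear_combination (max_add_min (T u y) (T v y)) * f y
  have hsum : I M + I m ≤ I u + I v := by
    rw [hI M, hI m, hI u, hI v]
    linarith
  have huv : I u = I v := le_antisymm (hu v) (hv u)
  have hMu : I u ≤ I M := hu M
  have hmu : I u ≤ I m := hu m
  have hMeq : I M = I u := by linarith
  have hmeq : I m = I u := by linarith
  constructor
  · intro w; rw [hMeq]; exact hu w
  · intro w; rw [hmeq]; exact hu w
end

section
/- Let α, β ∈ (0,1) and p > 1 satisfy α + 1/p - 1 > 0 and β + 1/p - 1 > 0. Then there exist σ, τ > 0 satisfying simultaneously: σ ≥ (α+1)/α, τ ≥ p[σ(1-α) + α], τ ≥ β/(β + 1/p - 1), and τ ≤ (σ - (1+β))/(1-β). -/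
/-- Compatibility of the decay exponents `σ, τ` in the two-parameter De Giorgi
iteration: if `α + 1/p - 1 > 0` and `β + 1/p - 1 > 0`, admissible `σ, τ` exist. -/
theorem sigma_tau_exist (α β p : ℝ) (hα : α ∈ Set.Ioo (0:ℝ) 1)
    (hβ : β ∈ Set.Ioo (0:ℝ) 1) (hp : 1 < p)
    (hαp : α + 1 / p - 1 > 0) (hβp : β + 1 / p - 1 > 0) :
    ∃ σ > (0:ℝ), ∃ τ > (0:ℝ),
      σ ≥ (α + 1) / α ∧
      τ ≥ p * (σ * (1 - α) + α) ∧
      τ ≥ β / (β + 1 / p - 1) ∧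
      τ ≤ (σ - (1 + β)) / (1 - β) := by
  obtain ⟨hα0, hα1⟩ := hα
  obtain ⟨hβ0, hβ1⟩ := hβ
  have hp0 : (0:ℝ) < p := by linarith
  have hb : (0:ℝ) < β + 1 / p - 1 := hβp
  have h1β : (0:ℝ) < 1 - β := by linarith
  -- p * (1 - β) < 1
  have hpβ : p * (1 - β) < 1 := by
    have h1 : 1 - β < 1 / p := by linarith
    have := (mul_lt_mul_iff_right₀ hp0).mpr h1
    rwa [mul_one_div, div_self (ne_of_gt hp0)] at this
  set c : ℝ := 1 - p * (1 - β) * (1 - α) with hc_def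
  have hc : (0:ℝ) < c := by nlinarith
  set B1 : ℝ := (α + 1) / α
  set B2 : ℝ := (1 + β + (1 - β) * p * α) / c
  set B3 : ℝ := (1 - β) * (β / (β + 1 / p - 1)) + 1 + β
  set σ : ℝ := max B1 (max B2 B3) with hσ_def
  have hσ1 : B1 ≤ σ := le_max_left _ _
  have hσ2 : B2 ≤ σ := le_trans (le_max_left _ _) (le_max_right _ _)
  have hσ3 : B3 ≤ σ := le_trans (le_max_right _ _) (le_max_right _ _)
  have hB1pos : (0:ℝ) < B1 := div_pos (by linarith) hα0
  have hσpos : (0:ℝ) < σ := lt_of_lt_of_le hB1pos hσ1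
  set τ : ℝ := (σ - (1 + β)) / (1 - β) with hτ_def
  have hX : (0:ℝ) < β / (β + 1 / p - 1) := div_pos hβ0 hb
  have hσ3' : (1 - β) * (β / (β + 1 / p - 1)) + 1 + β ≤ σ := hσ3
  have hτ3 : τ ≥ β / (β + 1 / p - 1) := by
    rw [hτ_def, ge_iff_le, le_div_iff₀ h1β]
    have h4 : (1 - β) * (β / (β + 1 / p - 1)) ≤ σ - (1 + β) := by linarith [hσ3']
    linarith [h4, hσ3', mul_comm (β / (β + 1 / p - 1)) (1 - β)]
  have hτpos : (0:ℝ) < τ := lt_of_lt_of_le hX hτ3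
  refine ⟨σ, hσpos, τ, hτpos, hσ1, ?_, hτ3, le_of_eq rfl⟩
  -- τ ≥ p * (σ * (1 - α) + α)
  have h2 : 1 + β + (1 - β) * p * α ≤ σ * c := by
    rw [← div_le_iff₀ hc] at *
    exact hσ2
  rw [hτ_def, ge_iff_le, le_div_iff₀ h1β]
  nlinarith [h2]
end
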